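/- Let G be a graph on n vertices with a linear ordering u_1,...,u_n of width b, and let u_j, u_k (j < k) be non-adjacent vertices of G with k − j ≥ b. Define f_0 as: f_0(u_j) = j for j ≤ b; f_0(u_j) = f_0(u_{j−b}) + b if j > b and (u_{j−b}, u_j) ∈ E(G); f_0(u_j) = f_0(u_{j−b}) + b + 1/n² otherwise. Then f_0(u_k) − f_0(u_j) > b. -/

import Mathlib

/-- with `f0` defined as in the construction of `I_0`
(see Statement 2), for any pair of non-adjacent vertices `u_j, u_k` with
`j < k` and `k - j ≥ b` we have `f0 (u_k) - f0 (u_j) > b`. -/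
theorem f0_separates_far_nonedges (n b : ℕ) (hb : 0 < b) (G : SimpleGraph (Fin n))
    (hwidth : ∀ j k : Fin n, G.Adj j k → |((j : ℕ) : ℤ) - ((k : ℕ) : ℤ)| ≤ (b : ℤ))
    (f0 : Fin n → ℝ)
    (hbase : ∀ j : Fin n, (j : ℕ) < b → f0 j = ((j : ℕ) : ℝ) + 1)
    (hadj : ∀ j : Fin n, b ≤ (j : ℕ) →
      G.Adj ⟨(j : ℕ) - b, Nat.lt_of_le_of_lt (Nat.sub_le _ _) j.isLt⟩ j →
      f0 j = f0 ⟨(j : ℕ) - b, Nat.lt_of_le_of_lt (Nat.sub_le _ _) j.isLt⟩ + (b : ℝ))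
    (hnadj : ∀ j : Fin n, b ≤ (j : ℕ) →
      ¬ G.Adj ⟨(j : ℕ) - b, Nat.lt_of_le_of_lt (Nat.sub_le _ _) j.isLt⟩ j →
      f0 j = f0 ⟨(j : ℕ) - b, Nat.lt_of_le_of_lt (Nat.sub_le _ _) j.isLt⟩ + (b : ℝ)
        + 1 / ((n : ℝ) ^ 2))
    (j k : Fin n) (hjk : (j : ℕ) < (k : ℕ)) (hfar : b ≤ (k : ℕ) - (j : ℕ))
    (hna : ¬ G.Adj j k) :
    f0 k - f0 j > (b : ℝ) := by
  have hn : 0 < n := j.pos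
  have hnR : (0 : ℝ) < (n : ℝ) ^ 2 := by positivity
  -- bounds on f0
  have key : ∀ M : ℕ, ∀ m : Fin n, (m : ℕ) = M →
      ((m : ℕ) : ℝ) + 1 ≤ f0 m ∧ f0 m ≤ ((m : ℕ) : ℝ) + 1 + ((m : ℕ) : ℝ) / (n : ℝ) ^ 2 := by
    intro M
    induction M using Nat.strong_induction_on with
    | _ M ih =>
      intro m hm
      by_cases hmb : (m : ℕ) < b
      · rw [hbase m hmb]
        constructor
        · exact le_rfl
        · have : (0:ℝ) ≤ ((m : ℕ) : ℝ) / (n : ℝ) ^ 2 := by positivity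
          linarith
      · push_neg at hmb
        set m' : Fin n := ⟨(m : ℕ) - b, Nat.lt_of_le_of_lt (Nat.sub_le _ _) m.isLt⟩ with hm'
        have hlt : (m' : ℕ) < M := by
          simp only [hm']
          omega
        obtain ⟨h1, h2⟩ := ih (m' : ℕ) (hm ▸ hlt) m' rfl
        have hm'val : ((m' : ℕ) : ℝ) = ((m : ℕ) : ℝ) - (b : ℝ) := by
          simp only [hm']
          push_cast [Nat.cast_sub hmb]
          ring
        have hsub1 : ((m : ℕ) : ℝ) - (b : ℝ) + 1 ≤ ((m : ℕ) : ℝ) := by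
          have : (1 : ℝ) ≤ (b : ℝ) := by exact_mod_cast hb
          linarith
        have hbound : (((m : ℕ) : ℝ) - (b : ℝ)) / (n:ℝ)^2 + 1 / (n:ℝ)^2
            ≤ ((m : ℕ) : ℝ) / (n:ℝ)^2 := by
          rw [← add_div, div_le_div_iff_of_pos_right hnR]
          linarith
        by_cases hA : G.Adj m' m
        · rw [hadj m hmb hA]
          rw [hm'val] at h1 h2
          constructor
          · linarith
          · have : (0:ℝ) ≤ 1 / (n:ℝ)^2 := by positivity
            linarith
        · rw [hnadj m hmb hA]
          rw [hm'val] at h1 h2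
          constructor
          · have : (0:ℝ) ≤ 1 / (n:ℝ)^2 := by positivity
            linarith
          · linarith
  rcases eq_or_lt_of_le hfar with heq | hgt
  · -- k = j + b exactly
    have hkb : b ≤ (k : ℕ) := by omega
    have hjeq : (⟨(k : ℕ) - b, Nat.lt_of_le_of_lt (Nat.sub_le _ _) k.isLt⟩ : Fin n) = j := by
      apply Fin.ext; simp; omega
    have hA : ¬ G.Adj ⟨(k : ℕ) - b, Nat.lt_of_le_of_lt (Nat.sub_le _ _) k.isLt⟩ k := by
      rw [hjeq]; exact hna
    rw [hnadj k hkb hA, hjeq]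
    have : (0:ℝ) < 1 / (n:ℝ)^2 := by positivity
    linarith
  · -- k - j > b
    obtain ⟨_, h2⟩ := key (j : ℕ) j rfl
    obtain ⟨h1, _⟩ := key (k : ℕ) k rfl
    have hkj : ((j : ℕ) : ℝ) + (b : ℝ) + 1 ≤ ((k : ℕ) : ℝ) := by
      have : (j : ℕ) + b + 1 ≤ (k : ℕ) := by omega
      exact_mod_cast this
    have hjn : ((j : ℕ) : ℝ) / (n:ℝ)^2 < 1 := by
      rw [div_lt_one hnR]
      have h1 : ((j : ℕ) : ℝ) < (n : ℝ) := by exact_mod_cast j.isLt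
      have h0 : (1:ℝ) ≤ (n : ℝ) := by exact_mod_cast hn
      have h2 : (n : ℝ) ≤ (n : ℝ)^2 := by nlinarith
      linarith
    linarith
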